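/- Under model (1.1) with p ≥ 3 and any deterministic positive semidefinite W ∈ ℝ^{q×q}: (i) if a and b lie in the same row cluster (a ∼ b), then COD_{Σ_{p,W}}(a,b) = 0; (ii) if in addition MCOD(Σ_{p,W}) > 0, then for all a ≠ b one has a ∼ b if and only if COD_{Σ_{p,W}}(a,b) = 0, so the row partition G^{(r)} is identifiable from Σ_{p,W} up to label switching. -/

import Mathlib

open MeasureTheory ProbabilityTheory Matrix BigOperators Finset
open scoped Classical

noncomputable section

instance {m n : Type*} : MeasurableSpace (Matrix m n ℝ) :=
  inferInstanceAs (MeasurableSpace (m → n → ℝ))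

/-- Entrywise expectation of a random matrix. -/
def matExp {Ω : Type*} [MeasurableSpace Ω] (μ : Measure Ω) {m n : ℕ}
    (X : Ω → Matrix (Fin m) (Fin n) ℝ) : Matrix (Fin m) (Fin n) ℝ :=
  Matrix.of fun i j => ∫ ω, X ω i j ∂μ

/-- A membership matrix: binary, every row has exactly one 1, every column is nonzero. -/
def IsMembership {p K : ℕ} (A : Matrix (Fin p) (Fin K) ℝ) : Prop :=
  (∀ i k, A i k = 0 ∨ A i k = 1) ∧ (∀ i, ∃! k, A i k = 1) ∧ (∀ k, ∃ i, A i k = 1)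

/-- `a` and `b` belong to the same cluster encoded by the membership matrix `A`. -/
def SameCluster {p K : ℕ} (A : Matrix (Fin p) (Fin K) ℝ) (a b : Fin p) : Prop :=
  ∃ k, A a k = 1 ∧ A b k = 1

/-- `COD_Σ(a,b) = max_{c ≠ a,b} |Σ_{ac} − Σ_{bc}|`. -/
def COD {p : ℕ} (S : Matrix (Fin p) (Fin p) ℝ) (a b : Fin p) : ℝ :=
  ⨆ c : Fin p, ⨆ _ : c ≠ a ∧ c ≠ b, |S a c - S b c|

/-- `MCOD(Σ) = min_{a ≁ b} COD_Σ(a,b)`, the minimum over pairs in different clusters. -/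
def MCOD {p : ℕ} (r : Fin p → Fin p → Prop) (S : Matrix (Fin p) (Fin p) ℝ) : ℝ :=
  ⨅ ab : {ab : Fin p × Fin p // ¬ r ab.1 ab.2}, COD S ab.1.1 ab.1.2

/-- Entrywise maximum norm `‖M‖_max = max_{i,j} |M_{ij}|`. -/
def maxNorm {p q : ℕ} (M : Matrix (Fin p) (Fin q) ℝ) : ℝ := ⨆ i, ⨆ j, |M i j|

/-- Frobenius norm. -/
def frob {m n : ℕ} (M : Matrix (Fin m) (Fin n) ℝ) : ℝ := Real.sqrt (∑ i, ∑ j, (M i j)^2)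

/-- Under model (1.1) with `p ≥ 3` and psd `W`: (i) within-cluster
pairs have `COD = 0`; (ii) if `MCOD(Σ_{p,W}) > 0`, then for all `a ≠ b`, `a ∼ b` iff
`COD_{Σ_{p,W}}(a,b) = 0`, so the row partition is identifiable from `Σ_{p,W}`. -/
theorem cod_identifiability
    {Ω : Type} [MeasurableSpace Ω] (μ : Measure Ω) [IsProbabilityMeasure μ]
    {p q K₁ K₂ : ℕ} (hp : 3 ≤ p)
    (A : Matrix (Fin p) (Fin K₁) ℝ) (B : Matrix (Fin q) (Fin K₂) ℝ)
    (Z : Ω → Matrix (Fin K₁) (Fin K₂) ℝ) (Γ X : Ω → Matrix (Fin p) (Fin q) ℝ)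
    (hA : IsMembership A) (hB : IsMembership B)
    (hmodel : ∀ ω, X ω = A * Z ω * Bᵀ + Γ ω)
    (hZmeas : Measurable Z) (hΓmeas : Measurable Γ)
    (hZmean : ∀ j k, ∫ ω, Z ω j k ∂μ = 0)
    (hΓmean : ∀ a b, ∫ ω, Γ ω a b ∂μ = 0)
    (hZint : ∀ j k j' k', Integrable (fun ω => Z ω j k * Z ω j' k') μ)
    (hΓint : ∀ a b a' b', Integrable (fun ω => Γ ω a b * Γ ω a' b') μ)
    (hZΓint : ∀ j k a b, Integrable (fun ω => Z ω j k * Γ ω a b) μ)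
    (hΓindep : iIndepFun
      (fun (ij : Fin p × Fin q) ω => Γ ω ij.1 ij.2) μ)
    (hindep : IndepFun Z Γ μ)
    (W : Matrix (Fin q) (Fin q) ℝ) (hW : W.PosSemidef) :
    (∀ a b : Fin p, SameCluster A a b →
        COD (matExp μ (fun ω => X ω * W * (X ω)ᵀ)) a b = 0) ∧
    (0 < MCOD (SameCluster A) (matExp μ (fun ω => X ω * W * (X ω)ᵀ)) →
      ∀ a b : Fin p, a ≠ b →
        (SameCluster A a b ↔
          COD (matExp μ (fun ω => X ω * W * (X ω)ᵀ)) a b = 0)) := by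
  classical
  set S := matExp μ (fun ω => X ω * W * (X ω)ᵀ) with hS
  -- basic measurability of entries
  have mZ : ∀ j k, Measurable fun ω => Z ω j k := fun j k => hZmeas.eval.eval
  have mΓ : ∀ i s, Measurable fun ω => Γ ω i s := fun i s => hΓmeas.eval.eval
  -- entrywise model expansion
  have hX : ∀ (ω : Ω) (i : Fin p) (s : Fin q),
      X ω i s = (∑ k, ∑ j, (A i j * B s k) * Z ω j k) + Γ ω i s := by
    intro ω i s
    rw [hmodel]
    simp only [Matrix.add_apply, Matrix.mul_apply, Matrix.transpose_apply, Finset.sum_mul]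
    congr 1
    refine Finset.sum_congr rfl fun k _ => Finset.sum_congr rfl fun j _ => by ring
  have mX : ∀ i s, Measurable fun ω => X ω i s := by
    intro i s
    have he : (fun ω => X ω i s)
        = fun ω => (∑ k, ∑ j, (A i j * B s k) * Z ω j k) + Γ ω i s :=
      funext fun ω => hX ω i s
    rw [he]
    exact (Finset.measurable_sum _ fun k _ =>
      Finset.measurable_sum _ fun j _ => (mZ j k).const_mul _).add (mΓ i s)
  -- L² membership of entries
  have hZ2 : ∀ j k, MemLp (fun ω => Z ω j k) 2 μ := fun j k =>
    (memLp_two_iff_integrable_sq (mZ j k).aestronglyMeasurable).2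
      (by simpa [sq] using hZint j k j k)
  have hΓ2 : ∀ i s, MemLp (fun ω => Γ ω i s) 2 μ := fun i s =>
    (memLp_two_iff_integrable_sq (mΓ i s).aestronglyMeasurable).2
      (by simpa [sq] using hΓint i s i s)
  have hX2 : ∀ i s, MemLp (fun ω => X ω i s) 2 μ := by
    intro i s
    have he : (fun ω => X ω i s)
        = fun ω => (∑ k, ∑ j, (A i j * B s k) * Z ω j k) + Γ ω i s :=
      funext fun ω => hX ω i s
    rw [he]
    exact (memLp_finset_sum _ fun k _ =>
      memLp_finset_sum _ fun j _ => (hZ2 j k).const_mul _).add (hΓ2 i s)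
  -- products of L² functions are integrable
  have intmul : ∀ {f g : Ω → ℝ}, MemLp f 2 μ → MemLp g 2 μ →
      Integrable (fun ω => f ω * g ω) μ := by
    intro f g hf hg
    have h := ((((hf.add hg).integrable_sq).sub hf.integrable_sq).sub
      hg.integrable_sq).const_mul ((1 : ℝ)/2)
    have he : (fun ω => f ω * g ω)
        = fun ω => (1/2 : ℝ) * ((f + g) ω ^ 2 - f ω ^ 2 - g ω ^ 2) := by
      funext ω; simp only [Pi.add_apply]; ring
    rw [he]; exact h
  -- mean-zero product facts
  have EΓΓ : ∀ (i : Fin p) (s : Fin q) (i' : Fin p) (t : Fin q),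
      (i, s) ≠ (i', t) → ∫ ω, Γ ω i s * Γ ω i' t ∂μ = 0 := by
    intro i s i' t hne
    have hind := hΓindep.indepFun hne
    have := IndepFun.integral_fun_mul_eq_mul_integral hind (mΓ i s).aestronglyMeasurable (mΓ i' t).aestronglyMeasurable
    rw [this, hΓmean, hΓmean, mul_zero]
  have EΓZ : ∀ (i : Fin p) (s : Fin q) (j : Fin K₁) (k : Fin K₂),
      ∫ ω, Γ ω i s * Z ω j k ∂μ = 0 := by
    intro i s j k
    have hind : IndepFun (fun ω => Z ω j k) (fun ω => Γ ω i s) μ :=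
      hindep.comp ((measurable_pi_apply k).comp (measurable_pi_apply j))
        ((measurable_pi_apply s).comp (measurable_pi_apply i))
    have := IndepFun.integral_fun_mul_eq_mul_integral hind.symm (mΓ i s).aestronglyMeasurable
      (mZ j k).aestronglyMeasurable
    rw [this, hΓmean, zero_mul]
  -- key: E[Γ_{is} X_{i't}] = 0 when i ≠ i'
  have EΓX : ∀ (i : Fin p) (s : Fin q) (i' : Fin p) (t : Fin q), i ≠ i' →
      ∫ ω, Γ ω i s * X ω i' t ∂μ = 0 := by
    intro i s i' t hii'
    have he : (fun ω => Γ ω i s * X ω i' t)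
        = fun ω => (∑ k, ∑ j, (A i' j * B t k) * (Γ ω i s * Z ω j k))
          + Γ ω i s * Γ ω i' t := by
      funext ω
      rw [hX ω i' t, mul_add]
      congr 1
      rw [Finset.mul_sum]
      refine Finset.sum_congr rfl fun k _ => ?_
      rw [Finset.mul_sum]
      exact Finset.sum_congr rfl fun j _ => by ring
    have int1 : ∀ (k : Fin K₂), ∀ (j : Fin K₁),
        Integrable (fun ω => (A i' j * B t k) * (Γ ω i s * Z ω j k)) μ :=
      fun k j => (intmul (hΓ2 i s) (hZ2 j k)).const_mul _
    rw [show (∫ ω, Γ ω i s * X ω i' t ∂μ)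
        = ∫ ω, ((∑ k, ∑ j, (A i' j * B t k) * (Γ ω i s * Z ω j k))
          + Γ ω i s * Γ ω i' t) ∂μ from by rw [← he],
      integral_add (integrable_finset_sum _ fun k _ =>
        integrable_finset_sum _ fun j _ => int1 k j) (intmul (hΓ2 i s) (hΓ2 i' t)),
      integral_finset_sum _ fun k _ => integrable_finset_sum _ fun j _ => int1 k j]
    have h2 : ∫ ω, Γ ω i s * Γ ω i' t ∂μ = 0 :=
      EΓΓ i s i' t (by simp [Prod.ext_iff, hii'])
    rw [h2, add_zero]
    refine Finset.sum_eq_zero fun k _ => ?_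
    rw [integral_finset_sum _ fun j _ => int1 k j]
    exact Finset.sum_eq_zero fun j _ => by rw [integral_const_mul, EΓZ, mul_zero]
  -- integrability of the matrix entries of X W Xᵀ termwise
  have intTerm : ∀ (i : Fin p) (s t : Fin q) (c : Fin p),
      Integrable (fun ω => X ω i s * W s t * X ω c t) μ := by
    intro i s t c
    have h := (intmul (hX2 i s) (hX2 c t)).const_mul (W s t)
    have he : (fun ω => X ω i s * W s t * X ω c t)
        = fun ω => W s t * (X ω i s * X ω c t) := by funext ω; ring
    rw [he]; exact h
  have intΓterm : ∀ (i : Fin p) (s t : Fin q) (c : Fin p),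
      Integrable (fun ω => W s t * (Γ ω i s * X ω c t)) μ :=
    fun i s t c => (intmul (hΓ2 i s) (hX2 c t)).const_mul _
  -- entry formula for X W Xᵀ
  have hEnt : ∀ (ω : Ω) (i c : Fin p),
      (X ω * W * (X ω)ᵀ) i c = ∑ t, ∑ s, X ω i s * W s t * X ω c t := by
    intro ω i c
    simp only [Matrix.mul_apply, Matrix.transpose_apply, Finset.sum_mul]
  -- S entries as iterated sums of integrals
  have hSe : ∀ (i c : Fin p),
      S i c = ∑ t, ∑ s, ∫ ω, X ω i s * W s t * X ω c t ∂μ := by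
    intro i c
    have h1 : S i c = ∫ ω, (X ω * W * (X ω)ᵀ) i c ∂μ := rfl
    rw [h1, show (fun ω => (X ω * W * (X ω)ᵀ) i c)
        = fun ω => ∑ t, ∑ s, X ω i s * W s t * X ω c t from funext fun ω => hEnt ω i c,
      integral_finset_sum _ fun t _ => integrable_finset_sum _ fun s _ => intTerm i s t c]
    exact Finset.sum_congr rfl fun t _ =>
      integral_finset_sum _ fun s _ => intTerm i s t c
  -- rows of A coincide within a cluster
  have hrow : ∀ a b : Fin p, SameCluster A a b → ∀ j, A a j = A b j := by
    intro a b ⟨k₀, hak, hbk⟩ j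
    rcases hA.1 a j with ha0 | ha1
    · rcases hA.1 b j with hb0 | hb1
      · rw [ha0, hb0]
      · have hj : j = k₀ := by
          rcases hA.2.1 b with ⟨k, hk, huk⟩
          rw [huk j hb1, huk k₀ hbk]
        have : A a j = 1 := by rw [hj]; exact hak
        rw [ha0] at this
        norm_num at this
    · have hj : j = k₀ := by
        rcases hA.2.1 a with ⟨k, hk, huk⟩
        rw [huk j ha1, huk k₀ hak]
      have : A b j = 1 := by rw [hj]; exact hbk
      rw [ha1, this]
  -- key entry equality
  have key : ∀ a b : Fin p, SameCluster A a b → ∀ c : Fin p, c ≠ a → c ≠ b →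
      S a c = S b c := by
    intro a b hab c hca hcb
    rw [hSe a c, hSe b c]
    refine Finset.sum_congr rfl fun t _ => Finset.sum_congr rfl fun s _ => ?_
    rw [← sub_eq_zero, ← integral_sub (intTerm a s t c) (intTerm b s t c)]
    have hAr := hrow a b hab
    have he : (fun ω => X ω a s * W s t * X ω c t - X ω b s * W s t * X ω c t)
        = fun ω => W s t * (Γ ω a s * X ω c t) - W s t * (Γ ω b s * X ω c t) := by
      funext ω
      have h1 : X ω a s - X ω b s = Γ ω a s - Γ ω b s := by
        rw [hX ω a s, hX ω b s,
          show (∑ k, ∑ j, (A a j * B s k) * Z ω j k)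
            = ∑ k, ∑ j, (A b j * B s k) * Z ω j k from
          Finset.sum_congr rfl fun k _ => Finset.sum_congr rfl fun j _ => by rw [hAr j]]
        ring
      linear_combination (W s t * X ω c t) * h1
    rw [he, integral_sub (intΓterm a s t c) (intΓterm b s t c),
      integral_const_mul, integral_const_mul,
      EΓX a s c t (Ne.symm hca), EΓX b s c t (Ne.symm hcb)]
    simp
  -- part (i): COD vanishes within clusters
  have part1 : ∀ a b : Fin p, SameCluster A a b → COD S a b = 0 := by
    intro a b hab
    have h0 : ∀ c : Fin p, (⨆ _ : c ≠ a ∧ c ≠ b, |S a c - S b c|) = 0 := by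
      intro c
      by_cases hc : c ≠ a ∧ c ≠ b
      · haveI : Nonempty (c ≠ a ∧ c ≠ b) := ⟨hc⟩
        rw [ciSup_const, key a b hab c hc.1 hc.2, sub_self, abs_zero]
      · haveI : IsEmpty (c ≠ a ∧ c ≠ b) := ⟨fun h => hc h⟩
        exact Real.iSup_of_isEmpty _
    have : COD S a b = ⨆ _ : Fin p, (0 : ℝ) := iSup_congr h0
    rw [this]
    exact Real.iSup_const_zero
  refine ⟨part1, fun hM a b hab => ⟨part1 a b, fun hcod => ?_⟩⟩
  by_contra hn
  have hle : MCOD (SameCluster A) S ≤ COD S a b := by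
    have hbdd : BddBelow (Set.range fun ab : {ab : Fin p × Fin p // ¬ SameCluster A ab.1 ab.2}
        => COD S ab.1.1 ab.1.2) := by
      refine ⟨0, ?_⟩
      rintro x ⟨c, rfl⟩
      exact Real.iSup_nonneg fun i => Real.iSup_nonneg fun _ => abs_nonneg _
    exact ciInf_le hbdd ⟨(a, b), hn⟩
  rw [hcod] at hle
  linarith
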